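/- Let p > 1 and R : ℝ^N → [0,∞) be twice continuously differentiable. Define F(θ) = −∇R(θ)/‖∇R(θ)‖^{(p−2)/(p−1)} if ∇R(θ) ≠ 0 and F(θ) = 0 otherwise (the p-gradient flow field). Then F is continuous, and with V = R one has V̇(θ) = ∇R(θ)·F(θ) = −‖∇R(θ)‖^{p/(p−1)} ≤ 0, so Z = {θ : V̇(θ) = 0} equals the set of critical points of R. Consequently: if the sequence (θ_n) generated by the LCR algorithm with this F and V is bounded, then every accumulation point of (θ_n) is a critical point of R; and if the sequence generated by the LCM algorithm with this F and V is bounded, then it has at least one accumulation point which is a critical point of R. -/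

import Mathlib

open Filter

/-- The Lyapunov derivative `V̇(y) = ⟪∇V(y), F(y)⟫`. -/
noncomputable def lyapDeriv {m : ℕ}
    (F : EuclideanSpace ℝ (Fin m) → EuclideanSpace ℝ (Fin m))
    (V : EuclideanSpace ℝ (Fin m) → ℝ) (y : EuclideanSpace ℝ (Fin m)) : ℝ :=
  inner ℝ (gradient V y) (F y)

/-- `f(y,η) = V(y + η F(y)) − V(y) − λ η V̇(y)`. -/
noncomputable def armijoGap {m : ℕ}
    (F : EuclideanSpace ℝ (Fin m) → EuclideanSpace ℝ (Fin m))
    (V : EuclideanSpace ℝ (Fin m) → ℝ) (lam : ℝ)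
    (y : EuclideanSpace ℝ (Fin m)) (η : ℝ) : ℝ :=
  V (y + η • F y) - V y - lam * η * lyapDeriv F V y

/-- The LCR algorithm. -/
def IsLCR {m : ℕ}
    (F : EuclideanSpace ℝ (Fin m) → EuclideanSpace ℝ (Fin m))
    (V : EuclideanSpace ℝ (Fin m) → ℝ) (lam ηinit f1 : ℝ)
    (y : ℕ → EuclideanSpace ℝ (Fin m)) (η : ℕ → ℝ) : Prop :=
  ∀ n, y (n + 1) = y n + η n • F (y n) ∧
    ∃ p : ℕ, η n = ηinit / f1 ^ p ∧
      armijoGap F V lam (y n) (η n) ≤ 0 ∧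
      ∀ k < p, ¬ armijoGap F V lam (y n) (ηinit / f1 ^ k) ≤ 0

/-- The LCM algorithm (convention `η_{-1} = η_init / f2`). -/
def IsLCM {m : ℕ}
    (F : EuclideanSpace ℝ (Fin m) → EuclideanSpace ℝ (Fin m))
    (V : EuclideanSpace ℝ (Fin m) → ℝ) (lam ηinit f1 f2 : ℝ)
    (y : ℕ → EuclideanSpace ℝ (Fin m)) (η : ℕ → ℝ) : Prop :=
  ∀ n, y (n + 1) = y n + η n • F (y n) ∧
    ∃ p : ℕ, η n = (if n = 0 then ηinit else f2 * η (n - 1)) / f1 ^ p ∧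
      armijoGap F V lam (y n) (η n) ≤ 0 ∧
      ∀ k < p, ¬ armijoGap F V lam (y n) ((if n = 0 then ηinit else f2 * η (n - 1)) / f1 ^ k) ≤ 0

variable {m : ℕ}
local notation "E" => EuclideanSpace ℝ (Fin m)

lemma grad_cont {R : E → ℝ} (hR : ContDiff ℝ 2 R) : Continuous (gradient R) := by
  have h1 : Continuous (fun x => fderiv ℝ R x) := hR.continuous_fderiv (by norm_num)
  exact (InnerProductSpace.toDual ℝ E).symm.continuous.comp h1

lemma inner_grad_eq {R : E → ℝ} (x v : E) :
    (inner ℝ (gradient R x) v : ℝ) = fderiv ℝ R x v := by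
  simp [gradient, InnerProductSpace.toDual_symm_apply]

lemma mvt_inner {R : E → ℝ} (hR : ContDiff ℝ 2 R) (y v : E) {s : ℝ} (hs : 0 < s) :
    ∃ c ∈ Set.Ioo (0:ℝ) s,
      (inner ℝ (gradient R (y + c • v)) v : ℝ) = (R (y + s • v) - R y) / s := by
  have hRd : Differentiable ℝ R := hR.differentiable (by norm_num)
  have hline : ∀ t : ℝ, HasDerivAt (fun t : ℝ => y + t • v) v t := by
    intro t
    simpa using ((hasDerivAt_id t).smul_const v).const_add y
  have hh : ∀ t : ℝ, HasDerivAt (fun t : ℝ => R (y + t • v))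
      ((inner ℝ (gradient R (y + t • v)) v : ℝ)) t := by
    intro t
    have := (hRd (y + t • v)).hasFDerivAt.comp_hasDerivAt t (hline t)
    rw [inner_grad_eq]
    exact this
  obtain ⟨c, hc, hceq⟩ := exists_hasDerivAt_eq_slope (fun t : ℝ => R (y + t • v))
    (fun t => (inner ℝ (gradient R (y + t • v)) v : ℝ)) hs
    (fun t _ => (hh t).continuousAt.continuousWithinAt) (fun t _ => hh t)
  refine ⟨c, hc, ?_⟩
  simpa using hceq

set_option maxHeartbeats 1000000 in
lemma cont_lemma {R : E → ℝ} (hR : ContDiff ℝ 2 R) {F : E → E} (hFc : Continuous F)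
    {lam : ℝ} (hlam : lam ∈ Set.Ioo (0:ℝ) 1)
    {z : ℕ → E} {θs : E} (hz : Tendsto z atTop (nhds θs))
    {s : ℕ → ℝ} (hspos : ∀ n, 0 < s n) (hs0 : Tendsto s atTop (nhds 0))
    (hgap : ∀ n, 0 < armijoGap F R lam (z n) (s n))
    (hL : lyapDeriv F R θs < 0) : False := by
  have hgc : Continuous (gradient R) := grad_cont hR
  have hmvt : ∀ n, ∃ c ∈ Set.Ioo (0:ℝ) (s n),
      (inner ℝ (gradient R (z n + c • F (z n))) (F (z n)) : ℝ)
        = (R (z n + (s n) • F (z n)) - R (z n)) / (s n) :=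
    fun n => mvt_inner hR (z n) (F (z n)) (hspos n)
  choose c hc hceq using hmvt
  -- c → 0
  have hc0 : Tendsto c atTop (nhds 0) :=
    tendsto_of_tendsto_of_tendsto_of_le_of_le tendsto_const_nhds hs0
      (fun n => (hc n).1.le) (fun n => (hc n).2.le)
  -- F(z n) → F θs
  have hFz : Tendsto (fun n => F (z n)) atTop (nhds (F θs)) := (hFc.tendsto θs).comp hz
  -- ξ n → θs
  have hξ : Tendsto (fun n => z n + c n • F (z n)) atTop (nhds θs) := by
    have := hz.add (hc0.smul hFz)
    simpa using this
  -- LHS → L θs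
  have hLHS : Tendsto (fun n => (inner ℝ (gradient R (z n + c n • F (z n))) (F (z n)) : ℝ))
      atTop (nhds (lyapDeriv F R θs)) :=
    Filter.Tendsto.inner ((hgc.tendsto θs).comp hξ) hFz
  -- RHS' : lam * L (z n) → lam * L θs
  have hLc : Continuous (lyapDeriv F R) := (hgc.inner hFc)
  have hRHS : Tendsto (fun n => lam * lyapDeriv F R (z n)) atTop
      (nhds (lam * lyapDeriv F R θs)) :=
    (tendsto_const_nhds.mul ((hLc.tendsto θs).comp hz))
  -- inequality at each n
  have hineq : ∀ n, lam * lyapDeriv F R (z n)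
      ≤ (inner ℝ (gradient R (z n + c n • F (z n))) (F (z n)) : ℝ) := by
    intro n
    rw [hceq n]
    have h := hgap n
    unfold armijoGap at h
    rw [le_div_iff₀ (hspos n)]
    nlinarith [hspos n]
  have hfin : lam * lyapDeriv F R θs ≤ lyapDeriv F R θs :=
    le_of_tendsto_of_tendsto' hRHS hLHS hineq
  nlinarith [hlam.1, hlam.2, hL]

lemma sum_lemma {R : E → ℝ} (hR0 : ∀ x, 0 ≤ R x) {F : E → E} {lam : ℝ}
    (hlam : lam ∈ Set.Ioo (0:ℝ) 1)
    {y : ℕ → E} {η : ℕ → ℝ} (hstep : ∀ n, y (n+1) = y n + η n • F (y n))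
    (hpos : ∀ n, 0 < η n) (hgap : ∀ n, armijoGap F R lam (y n) (η n) ≤ 0)
    (hLneg : ∀ x, lyapDeriv F R x ≤ 0) :
    Tendsto (fun n => η n * lyapDeriv F R (y n)) atTop (nhds 0) := by
  set a : ℕ → ℝ := fun n => η n * (-(lyapDeriv F R (y n)))
  have ha0 : ∀ n, 0 ≤ a n := fun n => mul_nonneg (hpos n).le (neg_nonneg.2 (hLneg (y n)))
  have hdec : ∀ n, lam * a n ≤ R (y n) - R (y (n+1)) := by
    intro n
    have h := hgap n
    unfold armijoGap at h
    rw [hstep n]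
    simp only [a]
    nlinarith
  have hsums : ∀ n, ∑ k ∈ Finset.range n, lam * a k ≤ R (y 0) := by
    intro n
    calc ∑ k ∈ Finset.range n, lam * a k ≤ ∑ k ∈ Finset.range n, (R (y k) - R (y (k+1))) :=
          Finset.sum_le_sum (fun k _ => hdec k)
      _ = R (y 0) - R (y n) := Finset.sum_range_sub' (fun k => R (y k)) n
      _ ≤ R (y 0) := by linarith [hR0 (y n)]
  have hsummable : Summable (fun n => lam * a n) :=
    summable_of_sum_range_le (fun n => mul_nonneg hlam.1.le (ha0 n)) hsums
  have h1 : Tendsto (fun n => lam * a n) atTop (nhds 0) := hsummable.tendsto_atTop_zero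
  have h2 : Tendsto a atTop (nhds 0) := by
    have := h1.const_mul lam⁻¹
    simp only [mul_zero] at this
    refine this.congr (fun n => ?_)
    rw [inv_mul_cancel_left₀ hlam.1.ne']
  have : Tendsto (fun n => -(a n)) atTop (nhds (-0)) := h2.neg
  simp only [neg_zero] at this
  refine this.congr (fun n => ?_)
  simp [a]

lemma F_norm {p : ℝ} {R : E → ℝ} {F : E → E} (hp : 1 < p)
    (hF0 : ∀ θ : E, gradient R θ = 0 → F θ = 0)
    (hFdef : ∀ θ : E, gradient R θ ≠ 0 →
      F θ = -(‖gradient R θ‖ ^ ((p - 2) / (p - 1)))⁻¹ • gradient R θ) (θ : E) :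
    ‖F θ‖ = ‖gradient R θ‖ ^ (1 / (p - 1)) := by
  have hp1 : p - 1 ≠ 0 := by linarith
  have hq1 : (1:ℝ) / (p - 1) ≠ 0 := one_div_ne_zero hp1
  by_cases hg : gradient R θ = 0
  · rw [hF0 θ hg, hg]
    simp only [norm_zero]
    rw [Real.zero_rpow hq1]
  · have hgn : 0 < ‖gradient R θ‖ := norm_pos_iff.2 hg
    set r := ‖gradient R θ‖ with hr
    rw [hFdef θ hg, norm_smul, norm_neg, norm_inv, Real.norm_eq_abs,
      abs_of_nonneg (Real.rpow_nonneg (norm_nonneg _) _)]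
    have h2 : (r ^ ((p-2)/(p-1)))⁻¹ * r = r ^ (-((p-2)/(p-1)) + 1) := by
      rw [Real.rpow_add hgn, Real.rpow_neg hgn.le, Real.rpow_one]
    rw [h2]
    congr 1
    field_simp
    norm_num

lemma lyap_formula {p : ℝ} {R : E → ℝ} {F : E → E} (hp : 1 < p)
    (hF0 : ∀ θ : E, gradient R θ = 0 → F θ = 0)
    (hFdef : ∀ θ : E, gradient R θ ≠ 0 →
      F θ = -(‖gradient R θ‖ ^ ((p - 2) / (p - 1)))⁻¹ • gradient R θ) (θ : E) :
    lyapDeriv F R θ = -(‖gradient R θ‖ ^ (p / (p - 1))) := by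
  have hp1 : p - 1 ≠ 0 := by linarith
  by_cases hg : gradient R θ = 0
  · rw [lyapDeriv, hF0 θ hg, hg]
    rw [inner_zero_right, norm_zero,
      Real.zero_rpow (div_ne_zero (by linarith) hp1)]
    ring
  · have hgn : 0 < ‖gradient R θ‖ := norm_pos_iff.2 hg
    set r := ‖gradient R θ‖ with hr
    rw [lyapDeriv, hFdef θ hg, real_inner_smul_right, real_inner_self_eq_norm_mul_norm]
    rw [← hr, ← Real.rpow_neg hgn.le]
    have h2 : r ^ (-((p-2)/(p-1))) * (r * r) = r ^ (-((p-2)/(p-1)) + 1 + 1) := by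
      rw [Real.rpow_add hgn, Real.rpow_add hgn, Real.rpow_one]
      ring
    have h3 : -((p-2)/(p-1)) + 1 + 1 = p / (p-1) := by
      field_simp
      ring
    rw [neg_mul, h2, h3]

lemma F_continuous {p : ℝ} {R : E → ℝ} {F : E → E} (hp : 1 < p) (hR : ContDiff ℝ 2 R)
    (hF0 : ∀ θ : E, gradient R θ = 0 → F θ = 0)
    (hFdef : ∀ θ : E, gradient R θ ≠ 0 →
      F θ = -(‖gradient R θ‖ ^ ((p - 2) / (p - 1)))⁻¹ • gradient R θ) :
    Continuous F := by
  have hgc : Continuous (gradient R) := grad_cont hR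
  rw [continuous_iff_continuousAt]
  intro θ
  by_cases hg : gradient R θ = 0
  · -- tendsto 0 via norms
    rw [ContinuousAt, hF0 θ hg]
    rw [tendsto_zero_iff_norm_tendsto_zero]
    have hcont : Continuous (fun x => ‖gradient R x‖ ^ (1 / (p - 1))) := by
      exact (hgc.norm).rpow_const (fun x => Or.inr (le_of_lt (one_div_pos.2 (by linarith))))
    have := hcont.tendsto θ
    rw [hg, norm_zero, Real.zero_rpow (one_div_ne_zero (by linarith))] at this
    exact this.congr (fun x => (F_norm hp hF0 hFdef x).symm)
  · have hgn : 0 < ‖gradient R θ‖ := norm_pos_iff.2 hg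
    have heq : ∀ᶠ x in nhds θ, F x
        = -(‖gradient R x‖ ^ ((p - 2) / (p - 1)))⁻¹ • gradient R x := by
      have : ∀ᶠ x in nhds θ, gradient R x ≠ 0 :=
        (hgc.tendsto θ).eventually (eventually_ne_nhds hg)
      exact this.mono (fun x hx => hFdef x hx)
    have hca : ContinuousAt
        (fun x => -(‖gradient R x‖ ^ ((p - 2) / (p - 1)))⁻¹ • gradient R x) θ := by
      have h1 : ContinuousAt (fun x => ‖gradient R x‖ ^ ((p - 2) / (p - 1))) θ :=
        (hgc.norm.continuousAt).rpow_const (Or.inl hgn.ne')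
      have h2 : ContinuousAt (fun x => -(‖gradient R x‖ ^ ((p - 2) / (p - 1)))⁻¹) θ :=
        (h1.inv₀ (by positivity)).neg
      exact h2.smul (hgc.continuousAt)
    exact hca.congr (Filter.EventuallyEq.symm heq)


lemma sum_lemma_summable {R : E → ℝ} (hR0 : ∀ x, 0 ≤ R x) {F : E → E} {lam : ℝ}
    (hlam : lam ∈ Set.Ioo (0:ℝ) 1)
    {y : ℕ → E} {η : ℕ → ℝ} (hstep : ∀ n, y (n+1) = y n + η n • F (y n))
    (hpos : ∀ n, 0 < η n) (hgap : ∀ n, armijoGap F R lam (y n) (η n) ≤ 0)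
    (hLneg : ∀ x, lyapDeriv F R x ≤ 0) :
    Summable (fun n => η n * (-(lyapDeriv F R (y n)))) := by
  set a : ℕ → ℝ := fun n => η n * (-(lyapDeriv F R (y n)))
  have ha0 : ∀ n, 0 ≤ a n := fun n => mul_nonneg (hpos n).le (neg_nonneg.2 (hLneg (y n)))
  have hdec : ∀ n, lam * a n ≤ R (y n) - R (y (n+1)) := by
    intro n
    have h := hgap n
    unfold armijoGap at h
    rw [hstep n]
    simp only [a]
    nlinarith
  have hsums : ∀ n, ∑ k ∈ Finset.range n, lam * a k ≤ R (y 0) := by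
    intro n
    calc ∑ k ∈ Finset.range n, lam * a k ≤ ∑ k ∈ Finset.range n, (R (y k) - R (y (k+1))) :=
          Finset.sum_le_sum (fun k _ => hdec k)
      _ = R (y 0) - R (y n) := Finset.sum_range_sub' (fun k => R (y k)) n
      _ ≤ R (y 0) := by linarith [hR0 (y n)]
  have hsummable : Summable (fun n => lam * a n) :=
    summable_of_sum_range_le (fun n => mul_nonneg hlam.1.le (ha0 n)) hsums
  refine (hsummable.mul_left lam⁻¹).congr (fun n => ?_)
  rw [inv_mul_cancel_left₀ hlam.1.ne']


lemma step_alg {f1 c0 : ℝ} (hf1 : (0:ℝ) < f1) {q : ℕ} (hq : 1 ≤ q) :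
    c0 / f1 ^ (q - 1) = f1 * (c0 / f1 ^ q) := by
  have h : f1 ^ q = f1 ^ (q - 1) * f1 := by
    rw [← pow_succ]
    congr 1
    omega
  rw [h]
  field_simp


/-- **pGD with Lyapunov backtracking.** The `p`-gradient flow field
`F(θ) = −∇R(θ)/‖∇R(θ)‖^{(p−2)/(p−1)}` (and `F(θ) = 0` at critical points) is continuous,
its Lyapunov derivative with `V = R` is `V̇(θ) = −‖∇R(θ)‖^{p/(p−1)} ≤ 0`, so `Z` is exactly
the set of critical points of `R`; consequently every accumulation point of a bounded LCR
sequence is a critical point of `R`, and a bounded LCM sequence has at least one accumulation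
point which is a critical point of `R`. -/
theorem pGD_lyapunov_backtracking
    {N : ℕ} (p : ℝ) (hp : 1 < p)
    (R : EuclideanSpace ℝ (Fin N) → ℝ) (hR0 : ∀ θ, 0 ≤ R θ) (hR : ContDiff ℝ 2 R)
    (F : EuclideanSpace ℝ (Fin N) → EuclideanSpace ℝ (Fin N))
    (hF0 : ∀ θ, gradient R θ = 0 → F θ = 0)
    (hFdef : ∀ θ, gradient R θ ≠ 0 →
      F θ = -(‖gradient R θ‖ ^ ((p - 2) / (p - 1)))⁻¹ • gradient R θ)
    (lam ηinit f1 f2 : ℝ)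
    (hlam : lam ∈ Set.Ioo (0 : ℝ) 1) (hηinit : 0 < ηinit) (hf1 : 1 < f1) (hf2 : 1 < f2) :
    Continuous F ∧
    (∀ θ, lyapDeriv F R θ = -(‖gradient R θ‖ ^ (p / (p - 1)))) ∧
    (∀ θ, lyapDeriv F R θ ≤ 0) ∧
    ({θ | lyapDeriv F R θ = 0} = {θ | gradient R θ = 0}) ∧
    (∀ (θ : ℕ → EuclideanSpace ℝ (Fin N)) (η : ℕ → ℝ),
      IsLCR F R lam ηinit f1 θ η → Bornology.IsBounded (Set.range θ) →
      ∀ θstar, (∃ φ : ℕ → ℕ, StrictMono φ ∧ Tendsto (θ ∘ φ) atTop (nhds θstar)) →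
        gradient R θstar = 0) ∧
    (∀ (θ : ℕ → EuclideanSpace ℝ (Fin N)) (η : ℕ → ℝ),
      IsLCM F R lam ηinit f1 f2 θ η → Bornology.IsBounded (Set.range θ) →
      ∃ θstar, gradient R θstar = 0 ∧
        ∃ φ : ℕ → ℕ, StrictMono φ ∧ Tendsto (θ ∘ φ) atTop (nhds θstar)) := by
  have hf1' : (0:ℝ) < f1 := by linarith
  have hFc : Continuous F := F_continuous hp hR hF0 hFdef
  have hform : ∀ θ, lyapDeriv F R θ = -(‖gradient R θ‖ ^ (p / (p - 1))) :=
    lyap_formula hp hF0 hFdef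
  have hLneg : ∀ θ, lyapDeriv F R θ ≤ 0 := fun θ => by
    rw [hform θ]
    exact neg_nonpos.2 (Real.rpow_nonneg (norm_nonneg _) _)
  have hq0 : p / (p - 1) ≠ 0 := div_ne_zero (by linarith) (by linarith)
  have hLzero : ∀ θ : EuclideanSpace ℝ (Fin N),
      lyapDeriv F R θ = 0 ↔ gradient R θ = 0 := fun θ => by
    rw [hform θ, neg_eq_zero, Real.rpow_eq_zero (norm_nonneg _) hq0, norm_eq_zero]
  have hLc : Continuous (lyapDeriv F R) := (grad_cont hR).inner hFc
  refine ⟨hFc, hform, hLneg, Set.ext (fun θ => by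
    simp only [Set.mem_setOf_eq]; exact hLzero θ), ?_, ?_⟩
  · -- LCR
    rintro y η hlcr hbdd θstar ⟨φ, hφ, hconv⟩
    have hstep : ∀ n, y (n+1) = y n + η n • F (y n) := fun n => (hlcr n).1
    choose pn hηeq hgap hfail using fun n => (hlcr n).2
    have hηpos : ∀ n, 0 < η n := fun n => by
      rw [hηeq n]; exact div_pos hηinit (pow_pos hf1' _)
    by_contra hg
    have hLs : lyapDeriv F R θstar < 0 :=
      lt_of_le_of_ne (hLneg _) (fun h => hg ((hLzero _).1 h))
    have hsum : Tendsto (fun n => η n * lyapDeriv F R (y n)) atTop (nhds 0) :=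
      sum_lemma hR0 hlam hstep hηpos hgap hLneg
    have hLyφ : Tendsto (fun n => lyapDeriv F R (y (φ n))) atTop
        (nhds (lyapDeriv F R θstar)) := (hLc.tendsto θstar).comp hconv
    have hprod : Tendsto (fun n => η (φ n) * lyapDeriv F R (y (φ n))) atTop (nhds 0) :=
      hsum.comp hφ.tendsto_atTop
    have hηφ0 : Tendsto (fun n => η (φ n)) atTop (nhds 0) := by
      have hdiv := hprod.div hLyφ (ne_of_lt hLs)
      rw [zero_div] at hdiv
      apply hdiv.congr'
      filter_upwards [hLyφ.eventually_ne (ne_of_lt hLs)] with n hn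
      simp only [Pi.div_apply]
      field_simp
    have hev : ∀ᶠ n in atTop, 1 ≤ pn (φ n) := by
      filter_upwards [hηφ0.eventually (gt_mem_nhds hηinit)] with n hn
      by_contra h
      push_neg at h
      have h0 : pn (φ n) = 0 := by omega
      rw [hηeq (φ n), h0, pow_zero, div_one] at hn
      exact lt_irrefl _ hn
    obtain ⟨M, hM⟩ := eventually_atTop.1 hev
    have hadd : Tendsto (fun n : ℕ => n + M) atTop atTop := tendsto_add_atTop_nat M
    refine cont_lemma hR hFc hlam (z := fun n => y (φ (n + M)))
      (hconv.comp hadd) (s := fun n => f1 * η (φ (n + M)))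
      (fun n => mul_pos hf1' (hηpos _)) ?_ ?_ hLs
    · have := (hηφ0.comp hadd).const_mul f1
      simpa using this
    · intro n
      have h1 : 1 ≤ pn (φ (n + M)) := hM (n + M) (by omega)
      have h2 := hfail (φ (n + M)) (pn (φ (n + M)) - 1) (by omega)
      rw [step_alg hf1' h1, ← hηeq (φ (n + M))] at h2
      linarith [not_le.1 h2]
  · -- LCM
    intro y η hlcm hbdd
    have hstep : ∀ n, y (n+1) = y n + η n • F (y n) := fun n => (hlcm n).1
    choose pn hηeq hgap hfail using fun n => (hlcm n).2
    have hηpos : ∀ n, 0 < η n := by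
      intro n
      induction n with
      | zero =>
        rw [hηeq 0]
        simp only [if_pos rfl]
        exact div_pos hηinit (pow_pos (by linarith) _)
      | succ k ih =>
        rw [hηeq (k+1)]
        simp only [Nat.succ_ne_zero, if_neg, Nat.add_sub_cancel]
        exact div_pos (mul_pos (by linarith) ih) (pow_pos (by linarith) _)
    by_cases hcase : ∃ n, gradient R (y n) = 0
    · obtain ⟨n, hn⟩ := hcase
      have hconst : ∀ k, y (n + k) = y n := by
        intro k
        induction k with
        | zero => rfl
        | succ j ih =>
          have := hstep (n + j)
          rw [ih, hF0 _ hn, smul_zero, add_zero] at this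
          exact this
      refine ⟨y n, hn, fun k => n + k, fun a b h => by dsimp only; omega, ?_⟩
      have : (y ∘ fun k => n + k) = fun _ => y n := funext (fun k => hconst k)
      rw [this]
      exact tendsto_const_nhds
    · push_neg at hcase
      have hLyneg : ∀ n, lyapDeriv F R (y n) < 0 := fun n =>
        lt_of_le_of_ne (hLneg _) (fun h => hcase n ((hLzero _).1 h))
      by_cases hdelta : ∃ δ > 0, ∀ n, lyapDeriv F R (y n) ≤ -δ
      · exfalso
        obtain ⟨δ, hδ, hδle⟩ := hdelta
        have hsumm : Summable (fun n => η n * (-(lyapDeriv F R (y n)))) :=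
          sum_lemma_summable hR0 hlam hstep hηpos hgap hLneg
        have hsummη : Summable η := by
          refine Summable.of_nonneg_of_le (fun n => (hηpos n).le) (fun n => ?_)
            (hsumm.mul_left δ⁻¹)
          have h1 : η n * δ ≤ η n * (-(lyapDeriv F R (y n))) :=
            mul_le_mul_of_nonneg_left (by linarith [hδle n]) (hηpos n).le
          have h2 : δ⁻¹ * (η n * δ) ≤ δ⁻¹ * (η n * -(lyapDeriv F R (y n))) :=
            mul_le_mul_of_nonneg_left h1 (by positivity)
          calc η n = δ⁻¹ * (η n * δ) := by field_simp
            _ ≤ _ := h2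
        have hη0 : Tendsto η atTop (nhds 0) := hsummη.tendsto_atTop_zero
        -- bound on F along the sequence
        obtain ⟨C, hC⟩ : ∃ C, ∀ n, ‖F (y n)‖ ≤ C := by
          obtain ⟨C, hC⟩ := hbdd.isCompact_closure.exists_bound_of_continuousOn
            hFc.continuousOn
          exact ⟨C, fun n => hC (y n) (subset_closure (Set.mem_range_self n))⟩
        have hcauchy : CauchySeq y := by
          refine cauchySeq_of_dist_le_of_summable (fun n => η n * C)
            (fun n => ?_) (hsummη.mul_right C)
          rw [hstep n, dist_self_add_right, norm_smul, Real.norm_eq_abs,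
            abs_of_pos (hηpos n)]
          exact mul_le_mul_of_nonneg_left (hC n) (hηpos n).le
        obtain ⟨θs, hθs⟩ := cauchySeq_tendsto_of_complete hcauchy
        have hLs : lyapDeriv F R θs < 0 := by
          have hlim : Tendsto (fun n => lyapDeriv F R (y n)) atTop
            (nhds (lyapDeriv F R θs)) := (hLc.tendsto θs).comp hθs
          have := le_of_tendsto hlim (Eventually.of_forall hδle)
          linarith
        have hfreq : ∃ᶠ n in atTop, 1 ≤ pn n := by
          by_contra h
          rw [not_frequently] at h
          obtain ⟨M, hM⟩ := eventually_atTop.1 h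
          have hgrow : ∀ k, η M ≤ η (M + k) := by
            intro k
            induction k with
            | zero => exact le_refl _
            | succ j ih =>
              have h0 : pn (M + j + 1) = 0 := by
                have := hM (M + j + 1) (by omega)
                omega
              have := hηeq (M + j + 1)
              rw [h0, pow_zero, div_one, if_neg (by omega : ¬ M + j + 1 = 0)] at this
              simp only [Nat.add_sub_cancel] at this
              show η M ≤ η (M + j + 1)
              calc η M ≤ η (M + j) := ih
                _ ≤ f2 * η (M + j) := le_mul_of_one_le_left (hηpos _).le hf2.le
                _ = η (M + j + 1) := this.symm
          obtain ⟨K, hK⟩ := eventually_atTop.1 (hη0.eventually (gt_mem_nhds (hηpos M)))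
          exact absurd (hgrow K) (not_le.2 (hK (M + K) (by omega)))
        obtain ⟨ψ, hψ, hψ1⟩ := extraction_of_frequently_atTop hfreq
        refine cont_lemma hR hFc hlam (z := fun n => y (ψ n))
          (hθs.comp hψ.tendsto_atTop) (s := fun n => f1 * η (ψ n))
          (fun n => mul_pos hf1' (hηpos _)) ?_ ?_ hLs
        · have := (hη0.comp hψ.tendsto_atTop).const_mul f1
          simpa using this
        · intro n
          have h1 : 1 ≤ pn (ψ n) := hψ1 n
          have h2 := hfail (ψ n) (pn (ψ n) - 1) (by omega)
          rw [step_alg hf1' h1, ← hηeq (ψ n)] at h2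
          linarith [not_le.1 h2]
      · push_neg at hdelta
        have hfreq : ∀ k : ℕ, ∃ᶠ n in atTop, -(1/((k:ℝ)+1)) < lyapDeriv F R (y n) := by
          intro k
          rw [frequently_atTop]
          intro M
          set S : Finset ℝ := (Finset.range (M+1)).image
            (fun n => -(lyapDeriv F R (y n))) with hS
          have hSne : S.Nonempty := ⟨_, Finset.mem_image_of_mem _ (Finset.mem_range.2
            (Nat.succ_pos M))⟩
          set δ0 : ℝ := S.min' hSne with hδ0
          have hδ0pos : 0 < δ0 := by
            obtain ⟨n, hn, heq⟩ := Finset.mem_image.1 (S.min'_mem hSne)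
            rw [hδ0, ← heq]
            linarith [hLyneg n]
          set δ : ℝ := min (1/((k:ℝ)+1)) δ0 with hδdef
          have hδpos : 0 < δ := lt_min (by positivity) hδ0pos
          obtain ⟨n, hn⟩ := hdelta δ hδpos
          refine ⟨n, ?_, ?_⟩
          · by_contra hle
            push_neg at hle
            have hmem : -(lyapDeriv F R (y n)) ∈ S :=
              Finset.mem_image_of_mem _ (Finset.mem_range.2 (by omega))
            have := S.min'_le _ hmem
            have hδle : δ ≤ δ0 := min_le_right _ _
            linarith
          · have : δ ≤ 1/((k:ℝ)+1) := min_le_left _ _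
            linarith
        obtain ⟨ψ, hψ, hψ1⟩ := extraction_forall_of_frequently hfreq
        have hLψ0 : Tendsto (fun k => lyapDeriv F R (y (ψ k))) atTop (nhds 0) := by
          have hlow : Tendsto (fun k : ℕ => -(1/((k:ℝ)+1))) atTop (nhds 0) := by
            have := (tendsto_one_div_add_atTop_nhds_zero_nat (𝕜 := ℝ)).neg
            simpa using this
          exact tendsto_of_tendsto_of_tendsto_of_le_of_le hlow tendsto_const_nhds
            (fun k => (hψ1 k).le) (fun k => (hLyneg (ψ k)).le)
        obtain ⟨θs, _, ψ2, hψ2, hconv2⟩ := tendsto_subseq_of_bounded hbdd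
          (fun n => Set.mem_range_self (ψ n) : ∀ n, (y ∘ ψ) n ∈ Set.range y)
        refine ⟨θs, ?_, ψ ∘ ψ2, hψ.comp hψ2, hconv2⟩
        exact (hLzero θs).1 (tendsto_nhds_unique
          ((hLc.tendsto θs).comp hconv2) (hLψ0.comp hψ2.tendsto_atTop))
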